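/- Let (M_j)_{j≥1} and (Q_j)_{j≥1} be sequences of nonnegative random variables such that for some 0 < δ ≤ 1: the M_j are i.i.d. with ρ := E[M_1^δ] < 1, the Q_j are identically distributed with E[Q_1^δ] < ∞, and for each k ≥ 2 the variable Q_k is independent of (M_1, …, M_{k-1}). Then the series R = Q_1 + Σ_{k≥2} Q_k ∏_{j=1}^{k-1} M_j converges almost surely to a finite random variable, and E[R^δ] ≤ E[Q_1^δ] / (1 - ρ). -/

import Mathlib

open MeasureTheory ProbabilityTheory Real Filter

private lemma ennreal_rpow_sum_le {ι : Type*} (s : Finset ι) (f : ι → ENNReal) {p : ℝ}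
    (h0 : 0 < p) (h1 : p ≤ 1) : (∑ i ∈ s, f i) ^ p ≤ ∑ i ∈ s, f i ^ p := by
  induction s using Finset.cons_induction with
  | empty => simp [ENNReal.zero_rpow_of_pos h0]
  | cons a s ha ih =>
      rw [Finset.sum_cons, Finset.sum_cons]
      exact le_trans (ENNReal.rpow_add_le_add_rpow _ _ h0.le h1) (add_le_add le_rfl ih)

/-- Perpetuity series: with `(M_j)` i.i.d. nonnegative, `ρ = E[M_1^δ] < 1`,
`(Q_j)` identically distributed nonnegative with `E[Q_1^δ] < ∞`, and `Q_k` independent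
of `(M_1, …, M_{k-1})`, the series `R = Q_1 + Σ_{k≥2} Q_k ∏_{j<k} M_j` converges a.s.
to a finite limit and `E[R^δ] ≤ E[Q_1^δ]/(1-ρ)`.  (Indices are shifted: `M 0 = M_1`.) -/
theorem stmt_6 {Ω : Type*} [MeasurableSpace Ω] (μ : Measure Ω) [IsProbabilityMeasure μ]
    (M Q : ℕ → Ω → ℝ) (hMmeas : ∀ n, Measurable (M n)) (hQmeas : ∀ n, Measurable (Q n))
    (hMnn : ∀ n ω, 0 ≤ M n ω) (hQnn : ∀ n ω, 0 ≤ Q n ω)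
    {δ : ℝ} (hδ0 : 0 < δ) (hδ1 : δ ≤ 1)
    (hMindep : iIndepFun M μ)
    (hMid : ∀ n, Measure.map (M n) μ = Measure.map (M 0) μ)
    (hQid : ∀ n, Measure.map (Q n) μ = Measure.map (Q 0) μ)
    (hQM : ∀ k : ℕ, 1 ≤ k → IndepFun (Q k) (fun ω => fun j : Fin k => M j ω) μ)
    (hMint : Integrable (fun ω => M 0 ω ^ δ) μ)
    (hρ : ∫ ω, M 0 ω ^ δ ∂μ < 1)
    (hQint : Integrable (fun ω => Q 0 ω ^ δ) μ)
    (Y : ℕ → Ω → ℝ)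
    (hY : ∀ n ω, Y n ω = ∑ k ∈ Finset.range n, Q k ω * ∏ j ∈ Finset.range k, M j ω) :
    (∀ᵐ ω ∂μ, ∃ L : ℝ, Tendsto (fun n => Y n ω) atTop (nhds L)) ∧
      ∫⁻ ω, ENNReal.ofReal ((⨆ n, Y n ω) ^ δ) ∂μ ≤
        ENNReal.ofReal ((∫ ω, Q 0 ω ^ δ ∂μ) / (1 - ∫ ω, M 0 ω ^ δ ∂μ)) := by
  have hρ0 : 0 ≤ ∫ ω, M 0 ω ^ δ ∂μ :=
    integral_nonneg fun ω => Real.rpow_nonneg (hMnn 0 ω) δ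
  have hEQ0 : 0 ≤ ∫ ω, Q 0 ω ^ δ ∂μ :=
    integral_nonneg fun ω => Real.rpow_nonneg (hQnn 0 ω) δ
  set r : ENNReal := ENNReal.ofReal (∫ ω, M 0 ω ^ δ ∂μ) with hr_def
  set a : ENNReal := ENNReal.ofReal (∫ ω, Q 0 ω ^ δ ∂μ) with ha_def
  have hr1 : r < 1 := by
    rw [hr_def, ← ENNReal.ofReal_one]
    exact ENNReal.ofReal_lt_ofReal_iff_of_nonneg hρ0 |>.mpr hρ
  -- the ENNReal-valued versions
  set Φ : ℝ → ENNReal := fun x => ENNReal.ofReal (x ^ δ) with hΦ_def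
  have hΦcont : Continuous Φ :=
    ENNReal.continuous_ofReal.comp (continuous_id.rpow_const fun _ => Or.inr hδ0.le)
  have hΦ : Measurable Φ := hΦcont.measurable
  set Mg : ℕ → Ω → ENNReal := fun j ω => Φ (M j ω) with hMg_def
  set Qg : ℕ → Ω → ENNReal := fun k ω => Φ (Q k ω) with hQg_def
  have hMg_meas : ∀ j, Measurable (Mg j) := fun j => hΦ.comp (hMmeas j)
  have hQg_meas : ∀ k, Measurable (Qg k) := fun k => hΦ.comp (hQmeas k)
  set P : ℕ → Ω → ENNReal := fun k ω => ∏ j ∈ Finset.range k, Mg j ω with hP_def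
  have hP_meas : ∀ k, Measurable (P k) :=
    fun k => Finset.measurable_prod _ fun j _ => hMg_meas j
  -- each Mg has lintegral r
  have hMg_int : ∀ j, ∫⁻ ω, Mg j ω ∂μ = r := by
    intro j
    calc ∫⁻ ω, Φ (M j ω) ∂μ = ∫⁻ x, Φ x ∂(Measure.map (M j) μ) :=
          (lintegral_map hΦ (hMmeas j)).symm
      _ = ∫⁻ x, Φ x ∂(Measure.map (M 0) μ) := by rw [hMid j]
      _ = ∫⁻ ω, Φ (M 0 ω) ∂μ := lintegral_map hΦ (hMmeas 0)
      _ = r := by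
          rw [hr_def]
          exact (ofReal_integral_eq_lintegral_ofReal hMint
            (Filter.Eventually.of_forall fun ω => Real.rpow_nonneg (hMnn 0 ω) δ)).symm
  have hQg_int : ∀ k, ∫⁻ ω, Qg k ω ∂μ = a := by
    intro k
    calc ∫⁻ ω, Φ (Q k ω) ∂μ = ∫⁻ x, Φ x ∂(Measure.map (Q k) μ) :=
          (lintegral_map hΦ (hQmeas k)).symm
      _ = ∫⁻ x, Φ x ∂(Measure.map (Q 0) μ) := by rw [hQid k]
      _ = ∫⁻ ω, Φ (Q 0 ω) ∂μ := lintegral_map hΦ (hQmeas 0)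
      _ = a := by
          rw [ha_def]
          exact (ofReal_integral_eq_lintegral_ofReal hQint
            (Filter.Eventually.of_forall fun ω => Real.rpow_nonneg (hQnn 0 ω) δ)).symm
  -- independence of the Mg's
  have hMgIndep : iIndepFun Mg μ :=
    hMindep.comp (fun _ => Φ) (fun _ => hΦ)
  -- lintegral of the partial products
  have hP_int : ∀ k, ∫⁻ ω, P k ω ∂μ = r ^ k := by
    intro k
    induction k with
    | zero => simp [hP_def]
    | succ n ih =>
        have hindep : IndepFun (∏ j ∈ Finset.range n, Mg j) (Mg n) μ :=
          hMgIndep.indepFun_prod_range_succ hMg_meas n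
        have hprod_eq : (∏ j ∈ Finset.range n, Mg j) = P n := by
          funext ω; rw [hP_def]; simp [Finset.prod_apply]
        rw [hprod_eq] at hindep
        have := lintegral_mul_eq_lintegral_mul_lintegral_of_indepFun
          (hP_meas n) (hMg_meas n) hindep
        have heq : ∀ ω, P (n+1) ω = (P n * Mg n) ω := by
          intro ω
          simp only [hP_def, Pi.mul_apply, Finset.prod_range_succ]
        calc ∫⁻ ω, P (n+1) ω ∂μ = ∫⁻ ω, (P n * Mg n) ω ∂μ := by
              exact lintegral_congr heq
          _ = (∫⁻ ω, P n ω ∂μ) * ∫⁻ ω, Mg n ω ∂μ := this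
          _ = r ^ n * r := by rw [ih, hMg_int n]
          _ = r ^ (n+1) := by ring
  -- lintegral of each term Qg k * P k
  have hQP_int : ∀ k, ∫⁻ ω, Qg k ω * P k ω ∂μ = a * r ^ k := by
    intro k
    rcases Nat.eq_zero_or_pos k with rfl | hk
    · simp only [hP_def, Finset.range_zero, Finset.prod_empty, mul_one, pow_zero]
      exact hQg_int 0
    · have hindep0 := hQM k hk
      set ψ : (Fin k → ℝ) → ENNReal := fun v => ∏ j : Fin k, Φ (v j) with hψ_def
      have hψ : Measurable ψ := by
        apply Finset.measurable_prod
        intro j _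
        exact hΦ.comp (measurable_pi_apply j)
      have hindep1 : IndepFun (Φ ∘ (Q k)) (ψ ∘ (fun ω => fun j : Fin k => M j ω)) μ :=
        hindep0.comp hΦ hψ
      have hcomp_eq : (ψ ∘ (fun ω => fun j : Fin k => M j ω)) = P k := by
        funext ω
        simp only [Function.comp_apply, hψ_def, hP_def, hMg_def]
        exact Fin.prod_univ_eq_prod_range (fun j => Φ (M j ω)) k
      rw [hcomp_eq] at hindep1
      have hQeq : (Φ ∘ (Q k)) = Qg k := rfl
      rw [hQeq] at hindep1
      have := lintegral_mul_eq_lintegral_mul_lintegral_of_indepFun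
        (hQg_meas k) (hP_meas k) hindep1
      calc ∫⁻ ω, Qg k ω * P k ω ∂μ = ∫⁻ ω, (Qg k * P k) ω ∂μ := rfl
        _ = (∫⁻ ω, Qg k ω ∂μ) * ∫⁻ ω, P k ω ∂μ := this
        _ = a * r ^ k := by rw [hQg_int k, hP_int k]
  -- basic properties of Y
  have hYnn : ∀ n ω, 0 ≤ Y n ω := by
    intro n ω
    rw [hY]
    exact Finset.sum_nonneg fun k _ => mul_nonneg (hQnn k ω)
      (Finset.prod_nonneg fun j _ => hMnn j ω)
  have hYmono : ∀ ω, Monotone fun n => Y n ω := by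
    intro ω
    apply monotone_nat_of_le_succ
    intro n
    rw [hY, hY, Finset.sum_range_succ]
    exact le_add_of_nonneg_right (mul_nonneg (hQnn n ω)
      (Finset.prod_nonneg fun j _ => hMnn j ω))
  have hYmeas : ∀ n, Measurable (Y n) := by
    intro n
    have : Y n = fun ω => ∑ k ∈ Finset.range n, Q k ω * ∏ j ∈ Finset.range k, M j ω :=
      funext fun ω => hY n ω
    rw [this]
    exact Finset.measurable_sum _ fun k _ =>
      (hQmeas k).mul (Finset.measurable_prod _ fun j _ => hMmeas j)
  -- pointwise bound
  have hptw : ∀ n ω, ENNReal.ofReal (Y n ω ^ δ) ≤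
      ∑ k ∈ Finset.range n, Qg k ω * P k ω := by
    intro n ω
    rw [hY]
    set t : ℕ → ℝ := fun k => Q k ω * ∏ j ∈ Finset.range k, M j ω with ht_def
    have htnn : ∀ k, 0 ≤ t k := fun k =>
      mul_nonneg (hQnn k ω) (Finset.prod_nonneg fun j _ => hMnn j ω)
    have h1 : ENNReal.ofReal ((∑ k ∈ Finset.range n, t k) ^ δ)
        = (∑ k ∈ Finset.range n, ENNReal.ofReal (t k)) ^ δ := by
      rw [← ENNReal.ofReal_sum_of_nonneg fun k _ => htnn k,
        ENNReal.ofReal_rpow_of_nonneg (Finset.sum_nonneg fun k _ => htnn k) hδ0.le]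
    have h2 : (∑ k ∈ Finset.range n, ENNReal.ofReal (t k)) ^ δ
        ≤ ∑ k ∈ Finset.range n, (ENNReal.ofReal (t k)) ^ δ :=
      ennreal_rpow_sum_le _ _ hδ0 hδ1
    have h3 : ∀ k, (ENNReal.ofReal (t k)) ^ δ = Qg k ω * P k ω := by
      intro k
      rw [ht_def]
      rw [ENNReal.ofReal_mul (hQnn k ω),
        ENNReal.ofReal_prod_of_nonneg fun j _ => hMnn j ω,
        ENNReal.mul_rpow_of_nonneg _ _ hδ0.le,
        ← ENNReal.prod_rpow_of_nonneg hδ0.le]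
      simp only [hQg_def, hMg_def, hΦ_def, hP_def]
      rw [ENNReal.ofReal_rpow_of_nonneg (hQnn k ω) hδ0.le]
      congr 1
      exact Finset.prod_congr rfl fun j _ =>
        ENNReal.ofReal_rpow_of_nonneg (hMnn j ω) hδ0.le
    calc ENNReal.ofReal ((∑ k ∈ Finset.range n, t k) ^ δ)
        = (∑ k ∈ Finset.range n, ENNReal.ofReal (t k)) ^ δ := h1
      _ ≤ ∑ k ∈ Finset.range n, (ENNReal.ofReal (t k)) ^ δ := h2
      _ = ∑ k ∈ Finset.range n, Qg k ω * P k ω :=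
          Finset.sum_congr rfl fun k _ => h3 k
  -- the bound B
  set B : ENNReal := a * (1 - r)⁻¹ with hB_def
  have hB_ne_top : B ≠ ⊤ := by
    apply ENNReal.mul_ne_top ENNReal.ofReal_ne_top
    rw [ENNReal.inv_ne_top]
    rw [← pos_iff_ne_zero]
    exact tsub_pos_of_lt hr1
  -- lintegral of the ENNReal series bound
  have hsum_le : ∀ n, ∫⁻ ω, ∑ k ∈ Finset.range n, Qg k ω * P k ω ∂μ ≤ B := by
    intro n
    rw [lintegral_finset_sum (f := fun k ω => Qg k ω * P k ω) _ fun k _ => (hQg_meas k).mul (hP_meas k)]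
    calc ∑ k ∈ Finset.range n, ∫⁻ ω, Qg k ω * P k ω ∂μ
        = ∑ k ∈ Finset.range n, a * r ^ k := Finset.sum_congr rfl fun k _ => hQP_int k
      _ ≤ ∑' k : ℕ, a * r ^ k := ENNReal.sum_le_tsum _
      _ = a * (1 - r)⁻¹ := by rw [ENNReal.tsum_mul_left, ENNReal.tsum_geometric]
  -- the sup function
  set F : Ω → ENNReal := fun ω => ⨆ n, ENNReal.ofReal (Y n ω ^ δ) with hF_def
  have hFn_meas : ∀ n, Measurable fun ω => ENNReal.ofReal (Y n ω ^ δ) :=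
    fun n => hΦ.comp (hYmeas n)
  have hF_meas : Measurable F := Measurable.iSup hFn_meas
  have hFn_mono : Monotone fun n ω => ENNReal.ofReal (Y n ω ^ δ) := by
    intro n m hnm ω
    exact ENNReal.ofReal_le_ofReal
      (Real.rpow_le_rpow (hYnn n ω) (hYmono ω hnm) hδ0.le)
  have hF_int : ∫⁻ ω, F ω ∂μ ≤ B := by
    rw [hF_def, lintegral_iSup hFn_meas hFn_mono]
    exact iSup_le fun n => le_trans (lintegral_mono fun ω => hptw n ω) (hsum_le n)
  have hF_ae : ∀ᵐ ω ∂μ, F ω < ⊤ :=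
    ae_lt_top hF_meas (ne_top_of_le_ne_top hB_ne_top hF_int)
  -- boundedness of Y on the good set
  have hbdd : ∀ ω, F ω < ⊤ → BddAbove (Set.range fun n => Y n ω) := by
    intro ω hω
    refine ⟨((F ω).toReal) ^ δ⁻¹, ?_⟩
    rintro x ⟨n, rfl⟩
    have h1 : ENNReal.ofReal (Y n ω ^ δ) ≤ F ω := le_iSup (fun n => ENNReal.ofReal (Y n ω ^ δ)) n
    have h2 : Y n ω ^ δ ≤ (F ω).toReal :=
      (ENNReal.ofReal_le_iff_le_toReal hω.ne).mp h1
    calc Y n ω = (Y n ω ^ δ) ^ δ⁻¹ := (Real.rpow_rpow_inv (hYnn n ω) hδ0.ne').symm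
      _ ≤ ((F ω).toReal) ^ δ⁻¹ :=
          Real.rpow_le_rpow (Real.rpow_nonneg (hYnn n ω) δ) h2 (inv_nonneg.mpr hδ0.le)
  constructor
  · refine hF_ae.mono fun ω hω => ?_
    exact ⟨⨆ n, Y n ω, tendsto_atTop_ciSup (hYmono ω) (hbdd ω hω)⟩
  · have hae_le : ∀ᵐ ω ∂μ, ENNReal.ofReal ((⨆ n, Y n ω) ^ δ) ≤ F ω := by
      refine hF_ae.mono fun ω hω => ?_
      have htend : Tendsto (fun n => Y n ω) atTop (nhds (⨆ n, Y n ω)) :=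
        tendsto_atTop_ciSup (hYmono ω) (hbdd ω hω)
      have htend2 : Tendsto (fun n => ENNReal.ofReal (Y n ω ^ δ)) atTop
          (nhds (ENNReal.ofReal ((⨆ n, Y n ω) ^ δ))) := by
        apply (ENNReal.continuous_ofReal.tendsto _).comp
        exact (Real.continuousAt_rpow_const _ δ (Or.inr hδ0.le)).tendsto.comp htend
      exact le_of_tendsto htend2 (Filter.Eventually.of_forall fun n =>
        le_iSup (fun n => ENNReal.ofReal (Y n ω ^ δ)) n)
    have h1 : ∫⁻ ω, ENNReal.ofReal ((⨆ n, Y n ω) ^ δ) ∂μ ≤ B :=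
      le_trans (lintegral_mono_ae hae_le) hF_int
    refine le_trans h1 ?_
    rw [hB_def, ha_def, hr_def]
    rw [ENNReal.ofReal_div_of_pos (by linarith)]
    rw [ENNReal.ofReal_sub 1 hρ0, ENNReal.ofReal_one]
    rw [div_eq_mul_inv]
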